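/- Let φ(u) = cosh u − (sinh u)/u with φ(0) = 0. Then for all x, y, z ≥ 0: φ(x+y)·φ(y+z) ≥ φ(x)·φ(z) + φ(y)·φ(x+y+z). -/

import Mathlib

open MeasureTheory Real Filter Finset Asymptotics

/-- Divided difference of the exponential at nodes `x 0, …, x n`
(Hermite–Genocchi iterated-integral form, valid for repeated nodes). -/
noncomputable def expDD {n : ℕ} (x : Fin (n + 1) → ℝ) : ℝ :=
  ∫ t in {t : Fin n → ℝ | (∀ i, 0 ≤ t i ∧ t i ≤ 1) ∧ ∀ i j : Fin n, i ≤ j → t j ≤ t i},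
    Real.exp (x 0 + ∑ i : Fin n, t i * (x i.succ - x i.castSucc))

/-- Node tuple `a 0 ≤ … ≤ a (n-1)` followed by `x` with multiplicity `p+1`
and `y` with multiplicity `q+1`. -/
noncomputable def nodesPQ (n p q : ℕ) (a : Fin n → ℝ) (x y : ℝ) :
    Fin (n + (p + 1) + (q + 1)) → ℝ := fun i =>
  if h : (i : ℕ) < n then a ⟨i, h⟩ else if (i : ℕ) < n + (p + 1) then x else y

/-- `Kₙ(x,y) = exp[a₁,…,aₙ, x^(p+1), y^(q+1)]`. -/
noncomputable def Kn (n p q : ℕ) (a : Fin n → ℝ) (x y : ℝ) : ℝ :=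
  expDD (nodesPQ n p q a x y)

/-- Beta-weighted integral form of `exp[x^(p+1), y^(q+1)]`. -/
noncomputable def K0int (p q : ℕ) (x y : ℝ) : ℝ :=
  (1 / ((Nat.factorial p : ℝ) * (Nat.factorial q : ℝ))) *
    ∫ τ in (0:ℝ)..1, τ ^ p * (1 - τ) ^ q * Real.exp (τ * x + (1 - τ) * y)

/-- First divided difference of the exponential. -/
noncomputable def dd1 (x y : ℝ) : ℝ :=
  if x = y then Real.exp x else (Real.exp x - Real.exp y) / (x - y)

/-- `h(x,y) = eˣ + eʸ − 2·exp[x,y]`. -/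
noncomputable def hxy (x y : ℝ) : ℝ := Real.exp x + Real.exp y - 2 * dd1 x y

/-- `φ(u) = cosh u − sinh u / u`, with `φ(0)=0`. -/
noncomputable def phi (u : ℝ) : ℝ :=
  if u = 0 then 0 else Real.cosh u - Real.sinh u / u

/-- Lower incomplete gamma `γ(n,z) = ∫₀ᶻ t^(n-1) e^(−t) dt` (oriented integral). -/
noncomputable def lowerGamma (n : ℕ) (z : ℝ) : ℝ :=
  ∫ t in (0:ℝ)..z, t ^ (n - 1) * Real.exp (-t)

/-- Sum of the `k` largest coordinates of `y`. -/
noncomputable def topSum {m : ℕ} (k : ℕ) (y : Fin m → ℝ) : ℝ :=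
  sSup {t : ℝ | ∃ S : Finset (Fin m), S.card = k ∧ t = ∑ i ∈ S, y i}

/-- `e^{−t[x₀,…,x_m]}`: the divided difference of `s ↦ e^{−t s}` at the nodes `x`. -/
noncomputable def ddExpNeg (t : ℝ) {m : ℕ} (x : Fin (m + 1) → ℝ) : ℝ :=
  (-t) ^ m * expDD fun i => -t * x i

noncomputable def fP (u : ℝ) : ℝ := Real.cosh u - Real.sinh u / u
noncomputable def fP1 (u : ℝ) : ℝ :=
  Real.sinh u - Real.cosh u / u + Real.sinh u / u ^ 2

lemma hasDerivAt_g (u : ℝ) :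
    HasDerivAt (fun v : ℝ => v * Real.cosh v - Real.sinh v) (u * Real.sinh u) u := by
  have h := ((hasDerivAt_id u).mul (Real.hasDerivAt_cosh u)).sub (Real.hasDerivAt_sinh u)
  refine h.congr_deriv ?_
  simp [id]

lemma g_mono : Monotone (fun v : ℝ => v * Real.cosh v - Real.sinh v) := by
  apply monotone_of_deriv_nonneg
  · exact fun u => (hasDerivAt_g u).differentiableAt
  · intro u
    rw [(hasDerivAt_g u).deriv]
    rcases le_total 0 u with h | h
    · exact mul_nonneg h (Real.sinh_nonneg_iff.mpr h)
    · have hs := Real.sinh_nonpos_iff.mpr h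
      nlinarith

lemma sinh_div_le {u : ℝ} (hu : u ≠ 0) : Real.sinh u / u ≤ Real.cosh u := by
  rcases lt_or_gt_of_ne hu with h | h
  · have hg : (fun v : ℝ => v * Real.cosh v - Real.sinh v) u ≤ 0 := by
      have := g_mono h.le
      simpa using this
    rw [div_le_iff_of_neg h]
    simp only at hg
    nlinarith [hg]
  · have hg : (0:ℝ) ≤ u * Real.cosh u - Real.sinh u := by
      have := g_mono h.le
      simpa using this
    rw [div_le_iff₀ h]
    nlinarith

lemma one_le_sinh_div {u : ℝ} (hu : u ≠ 0) : 1 ≤ Real.sinh u / u := by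
  rcases lt_or_gt_of_ne hu with h | h
  · rw [le_div_iff_of_neg h]
    simpa using Real.sinh_le_self_iff.mpr h.le
  · rw [le_div_iff₀ h]
    simpa using Real.self_le_sinh_iff.mpr h.le

lemma fP_nonneg {u : ℝ} (hu : u ≠ 0) : 0 ≤ fP u :=
  sub_nonneg.2 (sinh_div_le hu)

lemma phi_eq_fP {u : ℝ} (hu : u ≠ 0) : phi u = fP u := by simp [phi, fP, hu]

lemma phi_zero : phi 0 = 0 := by simp [phi]

lemma phi_nonneg (u : ℝ) : 0 ≤ phi u := by
  rcases eq_or_ne u 0 with h | h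
  · simp [h, phi_zero]
  · rw [phi_eq_fP h]; exact fP_nonneg h

lemma phi_le (u : ℝ) : phi u ≤ Real.cosh u - 1 := by
  rcases eq_or_ne u 0 with h | h
  · simp [h, phi_zero]
  · rw [phi_eq_fP h]
    have := one_le_sinh_div h
    simp only [fP]
    linarith

lemma continuousAt_phi_zero : ContinuousAt phi 0 := by
  have hb : Tendsto (fun u : ℝ => Real.cosh u - 1) (nhds 0) (nhds 0) := by
    have hc : Continuous fun u : ℝ => Real.cosh u - 1 := by continuity
    simpa using hc.tendsto 0
  have : Tendsto phi (nhds 0) (nhds 0) :=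
    squeeze_zero phi_nonneg phi_le hb
  simpa [ContinuousAt, phi_zero] using this

lemma phi_eventuallyEq_fP {u : ℝ} (hu : u ≠ 0) : phi =ᶠ[nhds u] fP :=
  eventually_of_mem (compl_singleton_mem_nhds hu) fun v hv => phi_eq_fP hv

lemma continuousAt_fP {u : ℝ} (hu : u ≠ 0) : ContinuousAt fP u :=
  (Real.continuous_cosh.continuousAt).sub
    ((Real.continuous_sinh.continuousAt).div continuousAt_id hu)

lemma continuousAt_phi {u : ℝ} (hu : 0 ≤ u) : ContinuousAt phi u := by
  rcases eq_or_ne u 0 with h | h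
  · rw [h]; exact continuousAt_phi_zero
  · exact (continuousAt_fP h).congr (phi_eventuallyEq_fP h).symm

lemma hasDerivAt_fP {u : ℝ} (hu : u ≠ 0) : HasDerivAt fP (fP1 u) u := by
  have h := (Real.hasDerivAt_cosh u).sub
    ((Real.hasDerivAt_sinh u).div (hasDerivAt_id u) hu)
  have he : fP = fun v => Real.cosh v - Real.sinh v / v := rfl
  rw [he]
  refine h.congr_deriv ?_
  simp only [fP1, id]
  field_simp
  ring

lemma hasDerivAt_fP1 {u : ℝ} (hu : u ≠ 0) :
    HasDerivAt fP1 ((1 + 2 / u ^ 2) * fP u) u := by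
  have h := ((Real.hasDerivAt_sinh u).sub
      ((Real.hasDerivAt_cosh u).div (hasDerivAt_id u) hu)).add
    ((Real.hasDerivAt_sinh u).div ((hasDerivAt_id u).pow 2) (pow_ne_zero 2 hu))
  have he : fP1 = fun v => Real.sinh v - Real.cosh v / v + Real.sinh v / v ^ 2 := rfl
  rw [he]
  refine h.congr_deriv ?_
  simp only [fP, id, Pi.pow_apply]
  field_simp
  ring

lemma hasDerivAt_phi {u : ℝ} (hu : 0 < u) : HasDerivAt phi (fP1 u) u :=
  (hasDerivAt_fP hu.ne').congr_of_eventuallyEq (phi_eventuallyEq_fP hu.ne')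

section Nmono

lemma Nmono {c p q : ℝ} (hp : 0 < p) (hpq : p ≤ q) (hq : 2 * q ≤ c) :
    fP1 p * fP (c - p) + fP p * fP1 (c - p) ≤ fP1 q * fP (c - q) + fP q * fP1 (c - q) := by
  set N : ℝ → ℝ := fun u => fP1 u * fP (c - u) + fP u * fP1 (c - u) with hN
  have key : ∀ u ∈ Set.Icc p q,
      HasDerivAt N ((2 / u ^ 2 - 2 / (c - u) ^ 2) * (fP u * fP (c - u))) u := by
    intro u hu
    have hu0 : 0 < u := lt_of_lt_of_le hp hu.1
    have hcu : 0 < c - u := by linarith [hu.2]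
    have hc1 : HasDerivAt (fun v : ℝ => fP (c - v)) (fP1 (c - u) * (0 - 1)) u :=
      (hasDerivAt_fP hcu.ne').comp u ((hasDerivAt_const u c).sub (hasDerivAt_id u))
    have hc2 : HasDerivAt (fun v : ℝ => fP1 (c - v)) (((1 + 2 / (c - u) ^ 2) * fP (c - u)) * (0 - 1)) u :=
      (hasDerivAt_fP1 hcu.ne').comp u ((hasDerivAt_const u c).sub (hasDerivAt_id u))
    have h := ((hasDerivAt_fP1 hu0.ne').mul hc1).add ((hasDerivAt_fP hu0.ne').mul hc2)
    refine h.congr_deriv ?_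
    ring
  have mono : MonotoneOn N (Set.Icc p q) := by
    apply monotoneOn_of_deriv_nonneg (convex_Icc p q)
    · exact fun u hu => (key u hu).continuousAt.continuousWithinAt
    · intro u hu
      rw [interior_Icc] at hu
      exact ((key u (Set.Ioo_subset_Icc_self hu)).differentiableAt).differentiableWithinAt
    · intro u hu
      rw [interior_Icc] at hu
      have hu' := Set.Ioo_subset_Icc_self hu
      rw [(key u hu').deriv]
      have hu0 : 0 < u := lt_of_lt_of_le hp hu'.1
      have hcu : 0 < c - u := by linarith [hu'.2]
      have h2 : u ≤ c - u := by linarith [hu'.2]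
      have hdiv : 2 / (c - u) ^ 2 ≤ 2 / u ^ 2 := by
        rw [div_le_div_iff₀ (by positivity) (by positivity)]
        nlinarith
      exact mul_nonneg (by linarith)
        (mul_nonneg (fP_nonneg hu0.ne') (fP_nonneg hcu.ne'))
  exact mono (Set.left_mem_Icc.2 hpq) (Set.right_mem_Icc.2 hpq) hpq

lemma Mstep {a b t : ℝ} (ht : 0 < t) (hta : t ≤ a) (htb : t ≤ b) :
    fP1 t * fP (a + b - t) + fP t * fP1 (a + b - t) ≤ fP1 a * fP b + fP a * fP1 b := by
  rcases le_total a b with h | h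
  · have := Nmono (c := a + b) ht hta (by linarith)
    rw [show a + b - a = b by ring] at this
    linarith
  · have := Nmono (c := a + b) ht htb (by linarith)
    rw [show a + b - b = a by ring] at this
    linarith

end Nmono

theorem stmt9 (x y z : ℝ) (hx : 0 ≤ x) (hy : 0 ≤ y) (hz : 0 ≤ z) :
    phi x * phi z + phi y * phi (x + y + z) ≤ phi (x + y) * phi (y + z) := by
  rcases eq_or_lt_of_le hx with hx0 | hx
  · subst hx0; simp [phi_zero]
  rcases eq_or_lt_of_le hy with hy0 | hy
  · subst hy0; simp [phi_zero]
  rcases eq_or_lt_of_le hz with hz0 | hz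
  · subst hz0; simp [phi_zero, mul_comm]
  -- main case: x, y, z > 0
  have key : MonotoneOn
      (fun t => phi (x + t) * phi (t + z) - phi x * phi z - phi t * phi (x + t + z))
      (Set.Icc 0 y) := by
    have hD : ∀ t ∈ Set.Ioo (0:ℝ) y, HasDerivAt
        (fun t => phi (x + t) * phi (t + z) - phi x * phi z - phi t * phi (x + t + z))
        ((fP1 (x + t) * phi (t + z) + phi (x + t) * fP1 (t + z))
          - (fP1 t * phi (x + t + z) + phi t * fP1 (x + t + z))) t := by
      intro t ht
      have ht0 : 0 < t := ht.1
      have h1 : 0 < x + t := by linarith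
      have h2 : 0 < t + z := by linarith
      have h3 : 0 < x + t + z := by linarith
      have d1 : HasDerivAt (fun t : ℝ => phi (x + t)) (fP1 (x + t) * 1) t :=
        (hasDerivAt_phi h1).comp t ((hasDerivAt_id t).const_add x)
      have d2 : HasDerivAt (fun t : ℝ => phi (t + z)) (fP1 (t + z) * 1) t :=
        by have := (hasDerivAt_phi h2).comp t ((hasDerivAt_id' t).add_const z); exact this
      have d4 : HasDerivAt (fun t : ℝ => phi (x + t + z)) (fP1 (x + t + z) * 1) t :=
        by have := (hasDerivAt_phi h3).comp t (((hasDerivAt_id' t).const_add x).add_const z); exact this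
      have h := ((d1.mul d2).sub (hasDerivAt_const t (phi x * phi z))).sub
        ((hasDerivAt_phi ht0).mul d4)
      refine h.congr_deriv ?_
      ring
    apply monotoneOn_of_deriv_nonneg (convex_Icc 0 y)
    · intro t ht
      have c1 : ContinuousAt (fun t : ℝ => phi (x + t)) t :=
        (continuousAt_phi (by linarith [ht.1])).comp
          ((continuous_const.add continuous_id).continuousAt)
      have c2 : ContinuousAt (fun t : ℝ => phi (t + z)) t :=
        (continuousAt_phi (by linarith [ht.1])).comp
          ((continuous_id.add continuous_const).continuousAt)
      have c3 : ContinuousAt phi t := continuousAt_phi ht.1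
      have c4 : ContinuousAt (fun t : ℝ => phi (x + t + z)) t :=
        (continuousAt_phi (by linarith [ht.1])).comp
          (((continuous_const.add continuous_id).add continuous_const).continuousAt)
      exact (((c1.mul c2).sub continuousAt_const).sub (c3.mul c4)).continuousWithinAt
    · intro t ht
      rw [interior_Icc] at ht
      exact ((hD t ht).differentiableAt).differentiableWithinAt
    · intro t ht
      rw [interior_Icc] at ht
      rw [(hD t ht).deriv]
      have ht0 : 0 < t := ht.1
      have h1 : 0 < x + t := by linarith
      have h2 : 0 < t + z := by linarith
      have h3 : 0 < x + t + z := by linarith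
      rw [phi_eq_fP h1.ne', phi_eq_fP h2.ne', phi_eq_fP ht0.ne', phi_eq_fP h3.ne']
      have := Mstep (a := x + t) (b := t + z) (t := t) ht0 (by linarith) (by linarith)
      rw [show x + t + (t + z) - t = x + t + z by ring] at this
      linarith
  have h0y : (0:ℝ) ∈ Set.Icc (0:ℝ) y := Set.left_mem_Icc.2 hy.le
  have hyy : y ∈ Set.Icc (0:ℝ) y := Set.right_mem_Icc.2 hy.le
  have := key h0y hyy hy.le
  simp only [add_zero, zero_add, phi_zero, zero_mul, sub_zero] at this
  linarith
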